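/- If G is a connected graph with at least 2 vertices and X is a vertex cover of G, then every superset S of X that is non-empty is a safe set provided each component of G − S has size at most |S|; in particular, any minimum vertex cover X of a connected graph G with |X| ≥ 1 is itself a safe set, so s(G) ≤ vc(G), and cs(G) ≤ 2·vc(G). -/
import Mathlib


variable {V : Type*}

/-- Two vertex sets are adjacent if some edge joins them. -/
def SetsAdj (G : SimpleGraph V) (A B : Set V) : Prop :=
  ∃ a ∈ A, ∃ b ∈ B, G.Adj a b

/-- `u` and `v` are connected inside the induced subgraph `G[S]`. -/
def ReachIn (G : SimpleGraph V) (S : Set V) (u v : V) : Prop :=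
  ∃ (hu : u ∈ S) (hv : v ∈ S), (G.induce S).Reachable ⟨u, hu⟩ ⟨v, hv⟩

/-- `C` is (the vertex set of) a connected component of the induced subgraph `G[S]`. -/
def IsCompOf (G : SimpleGraph V) (S C : Set V) : Prop :=
  ∃ v ∈ S, C = {u | ReachIn G S u v}

/-- A safe set: nonempty, and no component of `G[S]` is adjacent to a larger
component of `G - S`. -/
def IsSafeSet (G : SimpleGraph V) (S : Set V) : Prop :=
  S.Nonempty ∧ ∀ C D : Set V, IsCompOf G S C → IsCompOf G Sᶜ D →
    SetsAdj G C D → D.ncard ≤ C.ncard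

/-- A connected safe set. -/
def IsConnSafeSet (G : SimpleGraph V) (S : Set V) : Prop :=
  IsSafeSet G S ∧ (G.induce S).Connected

/-- The safe number: minimum size of a safe set. -/
noncomputable def sNum (G : SimpleGraph V) : ℕ :=
  sInf {n | ∃ S : Set V, IsSafeSet G S ∧ S.ncard = n}

/-- The connected safe number: minimum size of a connected safe set. -/
noncomputable def csNum (G : SimpleGraph V) : ℕ :=
  sInf {n | ∃ S : Set V, IsConnSafeSet G S ∧ S.ncard = n}

/-- The vertex cover number. -/
noncomputable def vcNum [Fintype V] (G : SimpleGraph V) : ℕ :=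
  sInf {n | ∃ X : Set V, (∀ u v : V, G.Adj u v → u ∈ X ∨ v ∈ X) ∧ X.ncard = n}

section Aux

lemma reachIn_refl {G : SimpleGraph V} {S : Set V} {u : V} (hu : u ∈ S) : ReachIn G S u u :=
  ⟨hu, hu, SimpleGraph.Reachable.refl _⟩

lemma reachIn_trans {G : SimpleGraph V} {S : Set V} {u v w : V} :
    ReachIn G S u v → ReachIn G S v w → ReachIn G S u w
  | ⟨hu, _, h⟩, ⟨_, hw, h'⟩ => ⟨hu, hw, h.trans h'⟩

lemma reachIn_of_adj {G : SimpleGraph V} {S : Set V} {u v : V} (hu : u ∈ S) (hv : v ∈ S)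
    (h : G.Adj u v) : ReachIn G S u v :=
  ⟨hu, hv, SimpleGraph.Adj.reachable (show (G.induce S).Adj ⟨u, hu⟩ ⟨v, hv⟩ from h)⟩

/-- If `X ⊆ S` is a vertex cover, components of `G - S` are singletons. -/
lemma comp_compl_ncard {G : SimpleGraph V} {X S D : Set V}
    (hX : ∀ u v : V, G.Adj u v → u ∈ X ∨ v ∈ X) (hXS : X ⊆ S)
    (hD : IsCompOf G Sᶜ D) : D.ncard = 1 := by
  obtain ⟨v, hv, rfl⟩ := hD
  have hbot : G.induce Sᶜ = ⊥ := by
    ext a b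
    simp only [SimpleGraph.comap_adj, SimpleGraph.bot_adj, iff_false]
    intro hadj
    rcases hX a b hadj with h | h
    · exact a.2 (hXS h)
    · exact b.2 (hXS h)
  have : {u | ReachIn G Sᶜ u v} = {v} := by
    ext u
    simp only [Set.mem_setOf_eq, Set.mem_singleton_iff]
    constructor
    · rintro ⟨hu, hv', h⟩
      rw [hbot, SimpleGraph.reachable_bot] at h
      exact congrArg Subtype.val h
    · rintro rfl; exact reachIn_refl hv
  rw [this, Set.ncard_singleton]

lemma safe_of_cover_subset [Finite V] {G : SimpleGraph V} {X S : Set V}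
    (hX : ∀ u v : V, G.Adj u v → u ∈ X ∨ v ∈ X) (hXS : X ⊆ S) (hS : S.Nonempty) :
    IsSafeSet G S := by
  refine ⟨hS, fun C D hC hD _ => ?_⟩
  rw [comp_compl_ncard hX hXS hD]
  obtain ⟨v, hv, rfl⟩ := hC
  exact (Set.ncard_pos (Set.toFinite _)).mpr ⟨v, reachIn_refl hv⟩

/-- A merging witness: a vertex outside `S` adjacent to two distinct components of `G[S]`. -/
def Wit (G : SimpleGraph V) (S : Set V) : Prop :=
  ∃ w ∉ S, ∃ x ∈ S, ∃ y ∈ S, G.Adj w x ∧ G.Adj w y ∧ ¬ ReachIn G S x y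

lemma walk_key {G : SimpleGraph V} {X S : Set V}
    (hX : ∀ u v : V, G.Adj u v → u ∈ X ∨ v ∈ X) (hXS : X ⊆ S) :
    ∀ {a b : V} (_ : G.Walk a b), b ∈ S →
      ((a ∈ S → ReachIn G S a b ∨ Wit G S) ∧
       (a ∉ S → ∀ a' ∈ S, G.Adj a' a → (ReachIn G S a' b ∨ Wit G S))) := by
  intro a b p
  induction p with
  | nil =>
    intro hb
    exact ⟨fun _ => Or.inl (reachIn_refl hb), fun ha => absurd hb ha⟩
  | @cons u v w h q ih =>
    intro hb
    constructor
    · intro ha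
      by_cases hv : v ∈ S
      · rcases (ih hb).1 hv with hr | hw
        · exact Or.inl (reachIn_trans (reachIn_of_adj ha hv h) hr)
        · exact Or.inr hw
      · exact (ih hb).2 hv u ha h
    · intro ha a' ha' hadj
      have hv : v ∈ S := hXS ((hX u v h).resolve_left fun hx => ha (hXS hx))
      by_cases hr : ReachIn G S a' v
      · rcases (ih hb).1 hv with h2 | hw
        · exact Or.inl (reachIn_trans hr h2)
        · exact Or.inr hw
      · exact Or.inr ⟨u, ha, a', ha', v, hv, hadj.symm, h, hr⟩

/-- If `G[S]` is disconnected, we can add one vertex and strictly decrease the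
number of connected components. -/
lemma step [Finite V] {G : SimpleGraph V} (hG : G.Connected) {X S : Set V}
    (hX : ∀ u v : V, G.Adj u v → u ∈ X ∨ v ∈ X) (hXS : X ⊆ S) (hS : S.Nonempty)
    (hnc : ¬ (G.induce S).Connected) :
    ∃ w ∉ S, Nat.card (G.induce (insert w S)).ConnectedComponent <
      Nat.card (G.induce S).ConnectedComponent := by
  -- first get a merging witness
  have hwit : Wit G S := by
    have hne : Nonempty (S : Set V) := ⟨⟨hS.some, hS.some_mem⟩⟩
    have hpre : ¬ (G.induce S).Preconnected := fun h =>
      hnc ((SimpleGraph.connected_iff _).mpr ⟨h, hne⟩)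
    obtain ⟨⟨a, ha⟩, ⟨b, hb⟩, hab⟩ :
        ∃ x y : (S : Set V), ¬ (G.induce S).Reachable x y := by
      by_contra hcon
      push_neg at hcon
      exact hpre fun x y => hcon x y
    obtain ⟨p⟩ := hG.preconnected a b
    rcases (walk_key hX hXS p hb).1 ha with ⟨_, _, hr⟩ | hw
    · exact absurd hr hab
    · exact hw
  obtain ⟨w, hw, x, hx, y, hy, hwx, hwy, hxy⟩ := hwit
  refine ⟨w, hw, ?_⟩
  set S' : Set V := insert w S with hS'def
  have hsub : S ⊆ S' := Set.subset_insert w S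
  let φ : G.induce S →g G.induce S' := ⟨fun u => ⟨u.1, hsub u.2⟩, fun hadj => hadj⟩
  let f := SimpleGraph.ConnectedComponent.map φ
  have hsurj : Function.Surjective f := by
    intro c
    induction c using SimpleGraph.ConnectedComponent.ind with
    | _ u =>
      obtain ⟨u, hu⟩ := u
      rcases (Set.mem_insert_iff.mp hu) with rfl | huS
      · refine ⟨SimpleGraph.connectedComponentMk _ ⟨x, hx⟩, ?_⟩
        show SimpleGraph.connectedComponentMk _ (φ ⟨x, hx⟩) = _
        exact SimpleGraph.ConnectedComponent.sound
          (SimpleGraph.Adj.reachable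
            (show (G.induce S').Adj ⟨x, hsub hx⟩ ⟨u, hu⟩ from hwx.symm))
      · refine ⟨SimpleGraph.connectedComponentMk _ ⟨u, huS⟩, ?_⟩
        show SimpleGraph.connectedComponentMk _ (φ ⟨u, huS⟩) = _
        rfl
  have hninj : ¬ Function.Injective f := by
    intro hinj
    have heq : f (SimpleGraph.connectedComponentMk _ ⟨x, hx⟩) =
        f (SimpleGraph.connectedComponentMk _ ⟨y, hy⟩) := by
      show SimpleGraph.connectedComponentMk _ (φ ⟨x, hx⟩) =
        SimpleGraph.connectedComponentMk _ (φ ⟨y, hy⟩)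
      refine SimpleGraph.ConnectedComponent.sound ?_
      have h1 : (G.induce S').Adj ⟨x, hsub hx⟩ ⟨w, Set.mem_insert w S⟩ := hwx.symm
      have h2 : (G.induce S').Adj ⟨w, Set.mem_insert w S⟩ ⟨y, hsub hy⟩ := hwy
      exact h1.reachable.trans h2.reachable
    have := SimpleGraph.ConnectedComponent.eq.mp (hinj heq)
    exact hxy ⟨hx, hy, this⟩
  letI : Fintype (G.induce S').ConnectedComponent := Fintype.ofFinite _
  letI : Fintype (G.induce S).ConnectedComponent := Fintype.ofFinite _
  rw [Nat.card_eq_fintype_card, Nat.card_eq_fintype_card]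
  exact Fintype.card_lt_of_surjective_not_injective f hsurj hninj

/-- Grow `S ⊇ X` into a connected superset, adding fewer vertices than the
number of components. -/
lemma connect [Finite V] {G : SimpleGraph V} (hG : G.Connected) {X : Set V}
    (hX : ∀ u v : V, G.Adj u v → u ∈ X ∨ v ∈ X) :
    ∀ n : ℕ, ∀ S : Set V, X ⊆ S → S.Nonempty →
      Nat.card (G.induce S).ConnectedComponent ≤ n →
      ∃ T : Set V, S ⊆ T ∧ (G.induce T).Connected ∧ T.ncard + 1 ≤ S.ncard + n := by
  intro n
  induction n with
  | zero =>
    intro S _ hS hc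
    exfalso
    have : Nonempty (G.induce S).ConnectedComponent :=
      ⟨SimpleGraph.connectedComponentMk _ ⟨hS.some, hS.some_mem⟩⟩
    have := Nat.card_pos (α := (G.induce S).ConnectedComponent)
    omega
  | succ n ih =>
    intro S hXS hS hc
    by_cases hconn : (G.induce S).Connected
    · exact ⟨S, subset_rfl, hconn, by omega⟩
    · obtain ⟨w, hw, hlt⟩ := step hG hX hXS hS hconn
      obtain ⟨T, hST, hTconn, hcard⟩ := ih (insert w S)
        (hXS.trans (Set.subset_insert w S)) (Set.insert_nonempty w S) (by omega)
      have hins : (insert w S).ncard = S.ncard + 1 :=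
        Set.ncard_insert_of_notMem hw (Set.toFinite S)
      exact ⟨T, (Set.subset_insert w S).trans hST, hTconn, by omega⟩

lemma exists_adj [Fintype V] {G : SimpleGraph V} (hG : G.Connected)
    (hcard : 2 ≤ Fintype.card V) : ∃ u v : V, G.Adj u v := by
  obtain ⟨u, v, huv⟩ := Fintype.exists_pair_of_one_lt_card (α := V) (by omega)
  obtain ⟨p⟩ := hG.preconnected u v
  cases p with
  | nil => exact absurd rfl huv
  | cons h _ => exact ⟨_, _, h⟩

end Aux

theorem stmt19 [Fintype V] (G : SimpleGraph V) (hG : G.Connected)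
    (hcard : 2 ≤ Fintype.card V) :
    (∀ X S : Set V, (∀ u v : V, G.Adj u v → u ∈ X ∨ v ∈ X) → X ⊆ S → S.Nonempty →
      (∀ D : Set V, IsCompOf G Sᶜ D → D.ncard ≤ S.ncard) → IsSafeSet G S) ∧
    (∀ X : Set V, (∀ u v : V, G.Adj u v → u ∈ X ∨ v ∈ X) → X.ncard = vcNum G →
      1 ≤ X.ncard → IsSafeSet G X) ∧
    sNum G ≤ vcNum G ∧ csNum G ≤ 2 * vcNum G := by
  -- a minimum vertex cover exists
  have hvc_ne : {n | ∃ X : Set V, (∀ u v : V, G.Adj u v → u ∈ X ∨ v ∈ X) ∧ X.ncard = n}.Nonempty :=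
    ⟨Fintype.card V, Set.univ, fun u v _ => Or.inl trivial, by
      simp [Set.ncard_univ, Nat.card_eq_fintype_card]⟩
  obtain ⟨X₀, hX₀, hX₀card⟩ := Nat.sInf_mem hvc_ne
  have hX₀ne : X₀.Nonempty := by
    obtain ⟨u, v, huv⟩ := exists_adj hG hcard
    rcases hX₀ u v huv with h | h
    exacts [⟨u, h⟩, ⟨v, h⟩]
  refine ⟨?_, ?_, ?_, ?_⟩
  · intro X S hX hXS hS _
    exact safe_of_cover_subset hX hXS hS
  · intro X hX _ hX1
    exact safe_of_cover_subset hX subset_rfl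
      ((Set.ncard_pos (Set.toFinite X)).mp (by omega))
  · exact Nat.sInf_le ⟨X₀, safe_of_cover_subset hX₀ subset_rfl hX₀ne, hX₀card⟩
  · -- grow X₀ to a connected safe set of size ≤ 2 * vcNum G
    have hcomps : Nat.card (G.induce X₀).ConnectedComponent ≤ X₀.ncard := by
      have hsurj : Function.Surjective
          (SimpleGraph.connectedComponentMk (G.induce X₀)) :=
        SimpleGraph.ConnectedComponent.ind fun v => ⟨v, rfl⟩
      have := Nat.card_le_card_of_surjective _ hsurj
      rwa [Nat.card_coe_set_eq] at this
    have hX₀vc : X₀.ncard = vcNum G := hX₀card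
    obtain ⟨T, hXT, hTconn, hTcard⟩ := connect hG hX₀ X₀.ncard X₀ subset_rfl hX₀ne hcomps
    have hTne : T.Nonempty := hX₀ne.mono hXT
    have hTsafe : IsSafeSet G T := safe_of_cover_subset hX₀ hXT hTne
    have hmem : T.ncard ∈ {n | ∃ S : Set V, IsConnSafeSet G S ∧ S.ncard = n} :=
      ⟨T, ⟨hTsafe, hTconn⟩, rfl⟩
    calc csNum G ≤ T.ncard := Nat.sInf_le hmem
      _ ≤ 2 * vcNum G := by omega
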